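/- Consider the error dynamics Lyapunov candidate W̃ = (1/2)C_dc·ṽ_dc² + (1/2)C·‖ṽ_dq‖² + (1/2)L·‖ĩ_dq‖² for the closed-loop converter error system in the dq frame. Its derivative along trajectories equals eᵀ P e where e = (ṽ_dc, ṽ_dq, ĩ_dq) and P = [[−G_dc, −(Cη/2)(J₂ v_{dq,s})ᵀ, −(Lη/2)(J₂ i_{dq,s})ᵀ],[−(Cη/2)J₂ v_{dq,s}, −g I₂, 0],[−(Lη/2)J₂ i_{dq,s}, 0, −R I₂]]. The symmetric matrix P is negative definite provided R·C²·η²·‖v_{dq,s}‖² + g·L²·η²·‖i_{dq,s}‖² < 4·R·G_dc·g. -/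
import Mathlib


open Real Matrix

set_option maxHeartbeats 1000000 in
/-- Negative definiteness of the Lyapunov-derivative quadratic form
eᵀ P e = −G_dc ṽ_dc² − g‖ṽ_dq‖² − R‖ĩ_dq‖² − Cη ṽ_dc (J₂ v_s)ᵀ ṽ_dq
          − Lη ṽ_dc (J₂ i_s)ᵀ ĩ_dq
under the condition R C² η² ‖v_s‖² + g L² η² ‖i_s‖² < 4 R G_dc g. -/
theorem lyapunov_matrix_negative_definite
    (Cdc C L Gdc R g η : ℝ)
    (hCdc : 0 < Cdc) (hC : 0 < C) (hL : 0 < L) (hG : 0 < Gdc) (hR : 0 < R)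
    (hg : 0 < g) (hη : 0 < η)
    (vs is : Fin 2 → ℝ)
    (hcond : R * C ^ 2 * η ^ 2 * (vs ⬝ᵥ vs) + g * L ^ 2 * η ^ 2 * (is ⬝ᵥ is)
      < 4 * R * Gdc * g) :
    ∀ (a : ℝ) (vd id : Fin 2 → ℝ), ¬(a = 0 ∧ vd = 0 ∧ id = 0) →
      -Gdc * a ^ 2 - g * (vd ⬝ᵥ vd) - R * (id ⬝ᵥ id)
        - C * η * a * ((!![(0:ℝ), -1; 1, 0]).mulVec vs ⬝ᵥ vd)
        - L * η * a * ((!![(0:ℝ), -1; 1, 0]).mulVec is ⬝ᵥ id) < 0 := by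
  intro a vd id hne
  simp only [dotProduct, Matrix.mulVec, Fin.sum_univ_two,
    Matrix.cons_val', Matrix.cons_val_zero, Matrix.cons_val_one, Matrix.head_cons,
    Matrix.empty_val', Matrix.cons_val_fin_one, Matrix.head_fin_const] at *
  have e00 : (!![(0:ℝ), -1; 1, 0]) 0 0 = 0 := rfl
  have e01 : (!![(0:ℝ), -1; 1, 0]) 0 1 = -1 := rfl
  have e10 : (!![(0:ℝ), -1; 1, 0]) 1 0 = 1 := rfl
  have e11 : (!![(0:ℝ), -1; 1, 0]) 1 1 = 0 := rfl
  rw [e00, e01, e10, e11]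
  rcases eq_or_ne a 0 with ha | ha
  · subst ha
    have hvi : vd ≠ 0 ∨ id ≠ 0 := by
      by_contra h
      push_neg at h
      exact hne ⟨rfl, h.1, h.2⟩
    have key : vd 0 ≠ 0 ∨ vd 1 ≠ 0 ∨ id 0 ≠ 0 ∨ id 1 ≠ 0 := by
      rcases hvi with h | h
      · have : ¬ (vd 0 = 0 ∧ vd 1 = 0) := by
          intro ⟨h0, h1⟩; exact h (funext (Fin.cases h0 (Fin.cases h1 (by simp))))
        tauto
      · have : ¬ (id 0 = 0 ∧ id 1 = 0) := by
          intro ⟨h0, h1⟩; exact h (funext (Fin.cases h0 (Fin.cases h1 (by simp))))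
        tauto
    ring_nf
    rcases key with h | h | h | h <;>
    · have hp := pow_two_pos_of_ne_zero h
      nlinarith [sq_nonneg (vd 0), sq_nonneg (vd 1), sq_nonneg (id 0), sq_nonneg (id 1),
        mul_pos hg hp, mul_pos hR hp]
  · have ha2 : 0 < a ^ 2 := by positivity
    have h1 := mul_pos ha2 (sub_pos.mpr hcond)
    nlinarith [sq_nonneg (2 * g * vd 0 - C * η * a * vs 1),
      sq_nonneg (2 * g * vd 1 + C * η * a * vs 0),
      sq_nonneg (2 * R * id 0 - L * η * a * is 1),
      sq_nonneg (2 * R * id 1 + L * η * a * is 0),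
      mul_pos hg hR, mul_pos (mul_pos hg hR) h1,
      mul_pos hg h1, mul_pos hR h1]
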